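/- Let S ∈ ℝ^{n_r×n}, and let D = [[I_n ⊗ S, 0],[0, I_p ⊗ S]] and d = [vec(S); vec(0_{n_r×p})] be the vectorized constraint data. Let θ̂_0 ∈ ℝ^{n²+np} and P_0 ∈ ℝ^{(n²+np)×(n²+np)} satisfy Dθ̂_0 = d and DP_0 = 0, and let ψ : ℕ → ℝ^{n²+np}, z : ℕ → ℝ be arbitrary sequences. Run the recursive least-squares iteration K_k = P_{k−1}ψ_{k−1}/(ψᵀ_{k−1}P_{k−1}ψ_{k−1} + 1), θ̂_k = θ̂_{k−1} + K_k(z_k − ψᵀ_{k−1}θ̂_{k−1}), P_k = (I − K_kψᵀ_{k−1})P_{k−1}, assuming ψᵀ_{k−1}P_{k−1}ψ_{k−1} + 1 ≠ 0 for all k. Write θ̂_k = [vec(Â_k); vec(B̂_k)] with Â_k ∈ ℝ^{n×n}, B̂_k ∈ ℝ^{n×p}. Then for every k ≥ 0 the un-vectorized estimated state matrices satisfy S Â_k = S and S B̂_k = 0_{n_r×p}; i.e., every intermediate recursive estimate yields a state-space model compatible with the state equality constraint S x = s. -/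

import Mathlib

open Matrix Kronecker

/-- Column-stacking vectorization of a matrix: `vec M` is indexed by (column, row). -/
def vec {m n : Type*} (M : Matrix m n ℝ) : n × m → ℝ := fun p => M p.2 p.1

/-- If the recursive least-squares iteration on the vectorized parameters is initialized
compatibly with the vectorized constraint `Dθ = d` built from `S`, then every intermediate
estimate, un-vectorized as `θ̂_k = [vec Â_k; vec B̂_k]`, yields state matrices satisfying
`S Â_k = S` and `S B̂_k = 0`; i.e. a model compatible with the constraint `Sx = s`. -/
theorem stmt_17 {n p nr : ℕ}
    (S : Matrix (Fin nr) (Fin n) ℝ)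
    (D : Matrix ((Fin n × Fin nr) ⊕ (Fin p × Fin nr)) ((Fin n × Fin n) ⊕ (Fin p × Fin n)) ℝ)
    (hD : D = Matrix.fromBlocks
        ((1 : Matrix (Fin n) (Fin n) ℝ) ⊗ₖ S) 0
        0 ((1 : Matrix (Fin p) (Fin p) ℝ) ⊗ₖ S))
    (d : (Fin n × Fin nr) ⊕ (Fin p × Fin nr) → ℝ)
    (hd : d = Sum.elim (_root_.vec S) (_root_.vec (0 : Matrix (Fin nr) (Fin p) ℝ)))
    (θ : ℕ → (Fin n × Fin n) ⊕ (Fin p × Fin n) → ℝ)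
    (P : ℕ → Matrix ((Fin n × Fin n) ⊕ (Fin p × Fin n))
      ((Fin n × Fin n) ⊕ (Fin p × Fin n)) ℝ)
    (K : ℕ → (Fin n × Fin n) ⊕ (Fin p × Fin n) → ℝ)
    (ψ : ℕ → (Fin n × Fin n) ⊕ (Fin p × Fin n) → ℝ) (z : ℕ → ℝ)
    (hθ0 : D.mulVec (θ 0) = d) (hP0 : D * P 0 = 0)
    (hden : ∀ k, ψ k ⬝ᵥ (P k).mulVec (ψ k) + 1 ≠ 0)
    (hK : ∀ k, K (k + 1) = (ψ k ⬝ᵥ (P k).mulVec (ψ k) + 1)⁻¹ • (P k).mulVec (ψ k))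
    (hθ : ∀ k, θ (k + 1) = θ k + (z (k + 1) - ψ k ⬝ᵥ θ k) • K (k + 1))
    (hP : ∀ k, P (k + 1) = (1 - vecMulVec (K (k + 1)) (ψ k)) * P k)
    (Ahat : ℕ → Matrix (Fin n) (Fin n) ℝ)
    (hAhat : ∀ k, Ahat k = Matrix.of fun i j => θ k (Sum.inl (j, i)))
    (Bhat : ℕ → Matrix (Fin n) (Fin p) ℝ)
    (hBhat : ∀ k, Bhat k = Matrix.of fun i j => θ k (Sum.inr (j, i))) :
    ∀ k, S * Ahat k = S ∧ S * Bhat k = 0 := by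
  have key : ∀ k, D.mulVec (θ k) = d ∧ D * P k = 0 := by
    intro k
    induction k with
    | zero => exact ⟨hθ0, hP0⟩
    | succ k ih =>
      obtain ⟨ihθ, ihP⟩ := ih
      have hDK : D.mulVec (K (k+1)) = 0 := by
        rw [hK k, mulVec_smul, mulVec_mulVec, ihP, zero_mulVec, smul_zero]
      have hDV : D * vecMulVec (K (k+1)) (ψ k) = 0 := by
        ext i j
        have h0 : (∑ x, D i x * K (k+1) x) = 0 := congrFun hDK i
        simp only [mul_apply, vecMulVec_apply, Matrix.zero_apply, ← mul_assoc,
          ← Finset.sum_mul]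
        rw [h0, zero_mul]
      refine ⟨?_, ?_⟩
      · rw [hθ k, mulVec_add, ihθ, mulVec_smul, hDK, smul_zero, add_zero]
      · rw [hP k, ← Matrix.mul_assoc, Matrix.mul_sub, Matrix.mul_one, hDV,
          sub_zero, ihP]
  intro k
  obtain ⟨hθk, -⟩ := key k
  constructor
  · ext i j
    have h1 := congrFun hθk (Sum.inl (j, i))
    simp only [hD, hd, mulVec, dotProduct, Fintype.sum_sum_type,
      fromBlocks_apply₁₁, fromBlocks_apply₁₂, kroneckerMap_apply,
      Matrix.zero_apply, zero_mul, Finset.sum_const_zero, add_zero,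
      Sum.elim_inl, _root_.vec, Matrix.one_apply, Fintype.sum_prod_type,
      ite_mul, one_mul, zero_mul] at h1
    simp only [Finset.sum_ite_irrel, Finset.sum_const_zero, Finset.sum_ite_eq,
      Finset.mem_univ, if_true] at h1
    simp only [mul_apply, hAhat, Matrix.of_apply]
    convert h1 using 1
  · ext i j
    have h1 := congrFun hθk (Sum.inr (j, i))
    simp only [hD, hd, mulVec, dotProduct, Fintype.sum_sum_type,
      fromBlocks_apply₂₁, fromBlocks_apply₂₂, kroneckerMap_apply,
      Matrix.zero_apply, zero_mul, Finset.sum_const_zero, zero_add,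
      Sum.elim_inr, _root_.vec, Matrix.one_apply, Fintype.sum_prod_type,
      ite_mul, one_mul, zero_mul] at h1
    simp only [Finset.sum_ite_irrel, Finset.sum_const_zero, Finset.sum_ite_eq,
      Finset.mem_univ, if_true] at h1
    simp only [mul_apply, hBhat, Matrix.of_apply, Matrix.zero_apply]
    convert h1 using 1
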